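/- Assume ε : ℝ³ → ℝ is 2π-periodic in each coordinate, twice continuously differentiable, satisfies ε(p) > ε(0) for all p ∈ ℝ³ \ (2πℤ)³, and has positive definite Hessian at 0. Let v : ℝ³ → ℂ be continuous and 2π-periodic in each coordinate, and let λ ≤ ε(0). Then the formula (G(λ)f)(p) = (2π)^{−3/2} ∫_{[−π,π]³} v(p−q)·(ε(q) − λ)^{−1}·f(q) dq defines a bounded linear operator on the Banach space of continuous functions ℝ³ → ℂ that are 2π-periodic in each coordinate (with the supremum norm), and this operator is compact. -/

import Mathlib

open MeasureTheory Real

noncomputable section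

/-- The cube `[-π,π]³` in `ℝ³`, a fundamental domain for the torus `𝕋³`. -/
def cube3 : Set (Fin 3 → ℝ) := Set.Icc (fun _ => -π) (fun _ => π)

instance : Fact (0 < 2 * π) := ⟨by positivity⟩

/-- The three-dimensional torus `𝕋³`. -/
abbrev Torus3 := Fin 3 → AddCircle (2 * π)

lemma int1d : IntegrableOn (fun x : ℝ => |x| ^ (-(2:ℝ)/3)) (Set.Icc (-π) π) volume := by
  have hrpow : IntervalIntegrable (fun x : ℝ => x ^ (-(2:ℝ)/3)) volume 0 π :=
    intervalIntegral.intervalIntegrable_rpow' (by norm_num)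
  have hpos : IntegrableOn (fun x : ℝ => |x| ^ (-(2:ℝ)/3)) (Set.Icc 0 π) volume := by
    have h1 : IntegrableOn (fun x : ℝ => x ^ (-(2:ℝ)/3)) (Set.Ioc 0 π) volume := by
      rwa [intervalIntegrable_iff_integrableOn_Ioc_of_le pi_pos.le] at hrpow
    have h2 : IntegrableOn (fun x : ℝ => x ^ (-(2:ℝ)/3)) (Set.Icc 0 π) volume :=
      h1.congr_set_ae MeasureTheory.Ioc_ae_eq_Icc.symm
    exact h2.congr_fun (fun x hx => by rw [abs_of_nonneg hx.1]) measurableSet_Icc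
  have hneg : IntegrableOn (fun x : ℝ => |x| ^ (-(2:ℝ)/3)) (Set.Icc (-π) 0) volume := by
    have A : MeasurableEmbedding (fun x : ℝ => -x) := (Homeomorph.neg ℝ).measurableEmbedding
    have hvol : (volume : Measure ℝ) = Measure.map (fun x : ℝ => -x) volume :=
      (Measure.map_neg_eq_self _).symm
    rw [IntegrableOn, hvol, Measure.restrict_map A.measurable measurableSet_Icc, A.integrable_map_iff]
    have hpre : ((fun x : ℝ => -x) ⁻¹' Set.Icc (-π) 0) = Set.Icc 0 π := by
      ext x
      simp only [Set.mem_preimage, Set.mem_Icc]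
      constructor <;> intro h <;> constructor <;> linarith [h.1, h.2]
    rw [hpre]
    simpa [Function.comp_def, abs_neg, IntegrableOn] using hpos
  have hu := hneg.union hpos
  rwa [Set.Icc_union_Icc_eq_Icc (by linarith [pi_pos]) pi_pos.le] at hu

lemma quadLower (ε : (Fin 3 → ℝ) → ℝ) (hsmooth : ContDiff ℝ 2 ε)
    (hd0 : fderiv ℝ ε 0 = 0)
    (hhess : ∀ u : Fin 3 → ℝ, u ≠ 0 → 0 < iteratedFDeriv ℝ 2 ε 0 ![u, u]) :
    ∃ c > 0, ∃ r > 0, ∀ q : Fin 3 → ℝ, ‖q‖ ≤ r → c * ‖q‖ ^ 2 ≤ ε q - ε 0 := by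
  have hvv : ∀ u : Fin 3 → ℝ, (![u, u] : Fin 2 → (Fin 3 → ℝ)) = fun _ => u := by
    intro u; funext i; fin_cases i <;> rfl
  set B := iteratedFDeriv ℝ 2 ε with hB
  have hBc : Continuous B := hsmooth.continuous_iteratedFDeriv (le_refl _)
  -- minimum of the Hessian quadratic form on the unit sphere
  have hS : IsCompact (Metric.sphere (0 : Fin 3 → ℝ) 1) := isCompact_sphere 0 1
  have hSne : (Metric.sphere (0 : Fin 3 → ℝ) 1).Nonempty :=
    NormedSpace.sphere_nonempty.mpr zero_le_one
  have hcont0 : Continuous fun u : Fin 3 → ℝ => B 0 (fun _ => u) :=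
    (B 0).cont.comp (continuous_pi fun _ => continuous_id)
  obtain ⟨u₀, hu₀S, hu₀min⟩ := hS.exists_isMinOn hSne hcont0.continuousOn
  have hu₀n : ‖u₀‖ = 1 := by simpa using hu₀S
  set m := B 0 (fun _ => u₀) with hmdef
  have hm : 0 < m := by
    have h := hhess u₀ (by intro h; rw [h] at hu₀n; simp at hu₀n)
    rwa [hvv u₀] at h
  -- continuity at 0 gives a radius
  obtain ⟨δ, hδ, hball⟩ := Metric.continuousAt_iff.mp hBc.continuousAt (m/2) (by positivity)
  -- quantitative positivity of the Hessian near 0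
  have hBlow : ∀ x : Fin 3 → ℝ, ‖x‖ ≤ δ/2 → ∀ u : Fin 3 → ℝ,
      m/2 * ‖u‖ ^ 2 ≤ B x (fun _ => u) := by
    intro x hx u
    rcases eq_or_ne u 0 with rfl | hu
    · have : B x (fun _ => (0 : Fin 3 → ℝ)) = 0 :=
        (B x).map_coord_zero (0 : Fin 2) rfl
      simp [this]
    · set w : Fin 3 → ℝ := ‖u‖⁻¹ • u with hwdef
      have hwn : ‖w‖ = 1 := norm_smul_inv_norm hu
      have h1 : m ≤ B 0 (fun _ => w) := hu₀min (by simpa using hwn)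
      have hdist : ‖B x - B 0‖ < m/2 := by
        have hx' : dist x 0 < δ := by rw [dist_zero_right]; linarith
        have := hball hx'
        rwa [dist_eq_norm] at this
      have h2 : |(B x - B 0) (fun _ => w)| ≤ ‖B x - B 0‖ := by
        have h3 := (B x - B 0).le_opNorm (fun _ => w)
        simpa [hwn] using h3
      have h4 : m/2 ≤ B x (fun _ => w) := by
        have h5 : B x (fun _ => w) = B 0 (fun _ => w) + (B x - B 0) (fun _ => w) := by
          simp [ContinuousMultilinearMap.sub_apply]
        have h6 := abs_le.mp h2
        linarith [h6.1]
      have hscale : B x (fun _ => u) = ‖u‖ ^ 2 * B x (fun _ => w) := by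
        have he : (fun _ : Fin 2 => u) = fun i : Fin 2 => ‖u‖ • ((fun _ : Fin 2 => w) i) := by
          funext i
          simp [hwdef, smul_smul, mul_inv_cancel₀ (norm_ne_zero_iff.mpr hu)]
        rw [he, (B x).map_smul_univ]
        simp only [Finset.prod_const, Finset.card_univ, Fintype.card_fin, smul_eq_mul]
        try ring
      rw [hscale]
      have := mul_le_mul_of_nonneg_left h4 (sq_nonneg ‖u‖)
      nlinarith [sq_nonneg ‖u‖]
  -- now the 1D argument along rays
  refine ⟨m/4, by positivity, δ/2, by positivity, ?_⟩
  intro q hq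
  have hdiff1 : Differentiable ℝ ε := hsmooth.differentiable (by norm_num)
  have hray : ∀ t : ℝ, HasDerivAt (fun t : ℝ => t • q) q t := by
    intro t
    simpa using (hasDerivAt_id t).smul_const q
  have hg' : ∀ t : ℝ, HasDerivAt (fun t => ε (t • q)) ((fderiv ℝ ε (t • q)) q) t := by
    intro t
    exact (hdiff1.differentiableAt.hasFDerivAt).comp_hasDerivAt t (hray t)
  have hfd : ContDiff ℝ 1 (fderiv ℝ ε) := hsmooth.fderiv_right (by norm_num)
  have hg'' : ∀ t : ℝ, HasDerivAt (fun t => (fderiv ℝ ε (t • q)) q)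
      (B (t • q) (fun _ => q)) t := by
    intro t
    have h2 : HasFDerivAt (fderiv ℝ ε) (fderiv ℝ (fderiv ℝ ε) (t • q)) (t • q) :=
      ((hfd.differentiable (by norm_num)).differentiableAt).hasFDerivAt
    have h3 := h2.comp_hasDerivAt t (hray t)
    have h4 := h3.clm_apply (hasDerivAt_const t q)
    have h5 : B (t • q) (fun _ => q) = (fderiv ℝ (fderiv ℝ ε) (t • q)) q q := by
      rw [hB, ← hvv q, iteratedFDeriv_two_apply]
      simp
    rw [h5]
    simpa using h4
  -- first monotonicity: φ₁ t = (fderiv ε (t•q)) q - (m/2)‖q‖² t is monotone on [0,1]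
  set C : ℝ := m/2 * ‖q‖ ^ 2 with hCdef
  set φ₁ : ℝ → ℝ := fun t => (fderiv ℝ ε (t • q)) q - C * t with hφ₁
  have hφ₁d : ∀ t : ℝ, HasDerivAt φ₁ (B (t • q) (fun _ => q) - C) t := by
    intro t
    have h : HasDerivAt φ₁ (B (t • q) (fun _ => q) - C * 1) t :=
      (hg'' t).sub ((hasDerivAt_id t).const_mul C)
    rwa [mul_one] at h
  have hφ₁mono : MonotoneOn φ₁ (Set.Icc 0 1) := by
    apply monotoneOn_of_deriv_nonneg (convex_Icc 0 1)
    · exact Continuous.continuousOn (by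
        exact continuous_iff_continuousAt.mpr fun t => (hφ₁d t).continuousAt)
    · intro t ht
      exact ((hφ₁d t).differentiableAt).differentiableWithinAt
    · intro t ht
      rw [(hφ₁d t).deriv]
      rw [interior_Icc] at ht
      have hnorm : ‖t • q‖ ≤ δ/2 := by
        rw [norm_smul]
        have : |t| ≤ 1 := by rw [abs_of_nonneg ht.1.le]; exact ht.2.le
        calc ‖t‖ * ‖q‖ ≤ 1 * (δ/2) := by
              apply mul_le_mul _ hq (norm_nonneg q) zero_le_one
              rwa [Real.norm_eq_abs]
          _ = δ/2 := one_mul _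
      have := hBlow (t • q) hnorm q
      linarith
  have hφ₁0 : φ₁ 0 = 0 := by simp [hφ₁, hd0]
  have hφ₁nonneg : ∀ t ∈ Set.Icc (0:ℝ) 1, 0 ≤ φ₁ t := by
    intro t ht
    have := hφ₁mono (Set.left_mem_Icc.mpr zero_le_one) ht ht.1
    rwa [hφ₁0] at this
  -- second monotonicity: φ₂ t = ε (t•q) - (m/4)‖q‖² t²
  set φ₂ : ℝ → ℝ := fun t => ε (t • q) - (C/2) * t ^ 2 with hφ₂
  have hφ₂d : ∀ t : ℝ, HasDerivAt φ₂ (φ₁ t) t := by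
    intro t
    have h1 : HasDerivAt φ₂ _ t := (hg' t).sub (((hasDerivAt_pow 2 t)).const_mul (C/2))
    convert h1 using 1
    simp only [hφ₁]
    push_cast
    ring
  have hφ₂mono : MonotoneOn φ₂ (Set.Icc 0 1) := by
    apply monotoneOn_of_deriv_nonneg (convex_Icc 0 1)
    · exact Continuous.continuousOn (by
        exact continuous_iff_continuousAt.mpr fun t => (hφ₂d t).continuousAt)
    · intro t ht
      exact ((hφ₂d t).differentiableAt).differentiableWithinAt
    · intro t ht
      rw [(hφ₂d t).deriv]
      rw [interior_Icc] at ht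
      exact hφ₁nonneg t ⟨ht.1.le, ht.2.le⟩
  have hfin := hφ₂mono (Set.left_mem_Icc.mpr zero_le_one)
      (Set.right_mem_Icc.mpr zero_le_one) zero_le_one
  simp only [hφ₂, zero_smul, one_smul, zero_pow, mul_zero, sub_zero, one_pow, mul_one] at hfin
  have : C/2 = m/4 * ‖q‖^2 := by rw [hCdef]; ring
  linarith [hfin, this ▸ hfin]

lemma eps_lower (ε : (Fin 3 → ℝ) → ℝ)
    (hεper : ∀ (p : Fin 3 → ℝ) (s : Fin 3 → ℤ),
      ε (fun i => p i + 2 * π * (s i : ℝ)) = ε p)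
    (hmin : ∀ p : Fin 3 → ℝ, ¬ (∀ i, ∃ n : ℤ, p i = 2 * π * n) → ε 0 < ε p) :
    ∀ q, ε 0 ≤ ε q := by
  intro q
  by_cases h : ∀ i, ∃ n : ℤ, q i = 2 * π * n
  · choose n hn using h
    have he : (fun i => (0 : Fin 3 → ℝ) i + 2 * π * (n i : ℝ)) = q := by
      funext i; simp [← hn i]
    have := hεper 0 n
    rw [he] at this
    exact this.ge
  · exact (hmin q h).le

lemma weightIntegrable (ε : (Fin 3 → ℝ) → ℝ)
    (hεper : ∀ (p : Fin 3 → ℝ) (s : Fin 3 → ℤ),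
      ε (fun i => p i + 2 * π * (s i : ℝ)) = ε p)
    (hsmooth : ContDiff ℝ 2 ε)
    (hmin : ∀ p : Fin 3 → ℝ, ¬ (∀ i, ∃ n : ℤ, p i = 2 * π * n) → ε 0 < ε p)
    (hhess : ∀ u : Fin 3 → ℝ, u ≠ 0 → 0 < iteratedFDeriv ℝ 2 ε 0 ![u, u])
    (lam : ℝ) (hlam : lam ≤ ε 0) :
    IntegrableOn (fun q => (ε q - lam)⁻¹) cube3 volume := by
  have hlow := eps_lower ε hεper hmin
  have hd0 : fderiv ℝ ε 0 = 0 := by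
    have hloc : IsLocalMin ε 0 := Filter.Eventually.of_forall hlow
    exact hloc.fderiv_eq_zero
  obtain ⟨c, hc, r, hr, hquad⟩ := quadLower ε hsmooth hd0 hhess
  -- far bound
  have hcube_cpt : IsCompact cube3 := isCompact_Icc
  have hfar : ∃ δ > 0, ∀ q ∈ cube3, r ≤ ‖q‖ → δ ≤ ε q - ε 0 := by
    by_cases hKe : (cube3 \ Metric.ball 0 r).Nonempty
    · have hK : IsCompact (cube3 \ Metric.ball 0 r) := hcube_cpt.diff Metric.isOpen_ball
      obtain ⟨q₀, hq₀, hq₀min⟩ := hK.exists_isMinOn hKe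
        ((hsmooth.continuous.sub continuous_const).continuousOn
          (s := cube3 \ Metric.ball 0 r) : ContinuousOn (fun q => ε q - ε 0) _)
      refine ⟨ε q₀ - ε 0, ?_, ?_⟩
      · have hq₀lat : ¬ ∀ i, ∃ n : ℤ, q₀ i = 2 * π * n := by
        -- if q₀ were a lattice point in the cube, it would be 0, but ‖q₀‖ ≥ r > 0
          intro h
          choose n hn using h
          have hz : q₀ = 0 := by
            funext i
            have h1 : -π ≤ q₀ i := by
              have := hq₀.1.1; exact this i
            have h2 : q₀ i ≤ π := by
              have := hq₀.1.2; exact this i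
            have habs : |q₀ i| ≤ π := abs_le.mpr ⟨h1, h2⟩
            rw [hn i] at habs
            have h3 : 2 * π * |(n i : ℝ)| ≤ π := by
              rwa [abs_mul, abs_of_pos (by positivity : (0:ℝ) < 2 * π)] at habs
            have h4 : |(n i : ℝ)| < 1 := by nlinarith [pi_pos]
            have h5 : n i = 0 := by
              have h6 : |n i| < 1 := by exact_mod_cast (by rwa [← Int.cast_abs] at h4 : ((|n i| : ℤ) : ℝ) < 1)
              have h7 := abs_nonneg (n i)
              have h8 : |n i| = 0 := by omega
              exact abs_eq_zero.mp h8
            simp [hn i, h5]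
          have hball : q₀ ∉ Metric.ball (0 : Fin 3 → ℝ) r := hq₀.2
          apply hball
          rw [hz]
          simpa using hr
        exact sub_pos.mpr (hmin q₀ hq₀lat)
      · intro q hq hqr
        have hqK : q ∈ cube3 \ Metric.ball 0 r := by
          refine ⟨hq, ?_⟩
          simp only [Metric.mem_ball, dist_zero_right, not_lt]
          exact hqr
        exact hq₀min hqK
    · refine ⟨1, one_pos, fun q hq hqr => absurd ?_ hKe⟩
      refine ⟨q, hq, ?_⟩
      simp only [Metric.mem_ball, dist_zero_right, not_lt]
      exact hqr
  obtain ⟨δ, hδ, hfar⟩ := hfar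
  have hpos : ∀ q, 0 ≤ ε q - lam := fun q => by linarith [hlow q]
  -- the dominating function
  set D : (Fin 3 → ℝ) → ℝ := fun q => ∏ i, |q i| ^ (-(2:ℝ)/3) with hD
  have hDint : IntegrableOn D cube3 volume := by
    set h1 : ℝ → ℝ := (Set.Icc (-π) π).indicator (fun x => |x| ^ (-(2:ℝ)/3)) with hh1
    have h1int : Integrable h1 volume := by
      rw [hh1, integrable_indicator_iff measurableSet_Icc]
      exact int1d
    have h2 := Integrable.fintype_prod (𝕜 := ℝ) (f := fun _ : Fin 3 => h1) (fun _ => h1int)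
    refine (h2.integrableOn).congr_fun ?_ measurableSet_Icc
    intro q hq
    have hq' : ∀ i, q i ∈ Set.Icc (-π) π := by
      intro i; exact ⟨hq.1 i, hq.2 i⟩
    simp only [hh1]
    exact Finset.prod_congr rfl fun i _ => Set.indicator_of_mem (hq' i) _
  have hDnonneg : ∀ q, 0 ≤ D q :=
    fun q => Finset.prod_nonneg fun i _ => Real.rpow_nonneg (abs_nonneg _) _
  have hcubevol : volume cube3 < ⊤ := hcube_cpt.measure_lt_top
  have hgint : IntegrableOn (fun q => c⁻¹ * D q + δ⁻¹) cube3 volume := by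
    refine (hDint.const_mul c⁻¹).add ?_
    exact integrableOn_const hcubevol.ne
  -- null set of coordinate hyperplanes
  have hnull : volume {q : Fin 3 → ℝ | ∃ i, q i = 0} = 0 := by
    have : {q : Fin 3 → ℝ | ∃ i, q i = 0} = ⋃ i, {q : Fin 3 → ℝ | q i = 0} := by
      ext q; simp
    rw [this]
    refine measure_iUnion_null fun i => ?_
    rw [volume_pi]
    exact Measure.pi_hyperplane _ i 0
  refine Integrable.mono' hgint ?_ ?_
  · exact ((hsmooth.continuous.sub continuous_const).measurable.inv).aestronglyMeasurable
  · have hae1 : ∀ᵐ q ∂(volume.restrict cube3), ¬ ∃ i, q i = 0 :=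
      Filter.Eventually.filter_mono (ae_mono Measure.restrict_le_self)
        (compl_mem_ae_iff.mpr hnull)
    have hae2 : ∀ᵐ q ∂(volume.restrict cube3), q ∈ cube3 :=
      ae_restrict_mem measurableSet_Icc
    filter_upwards [hae1, hae2] with q hqi hqc
    push_neg at hqi
    have habs : ‖(ε q - lam)⁻¹‖ = (ε q - lam)⁻¹ := by
      rw [Real.norm_eq_abs, abs_of_nonneg (inv_nonneg.mpr (hpos q))]
    rw [habs]
    rcases le_or_gt ‖q‖ r with hler | hgtr
    · -- near zero : quadratic bound
      have hq0 : q ≠ 0 := by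
        intro h
        exact hqi 0 (by rw [h]; rfl)
      have hnq : 0 < ‖q‖ := norm_pos_iff.mpr hq0
      have hql : 0 < c * ‖q‖ ^ 2 := by positivity
      have h1 : c * ‖q‖ ^ 2 ≤ ε q - lam := le_trans (hquad q hler) (by linarith [hlow q])
      have h2 : (ε q - lam)⁻¹ ≤ (c * ‖q‖ ^ 2)⁻¹ := by
        apply inv_anti₀ hql h1
      have hprodpos : 0 < ∏ i, |q i| ^ ((2:ℝ)/3) :=
        Finset.prod_pos fun i _ => Real.rpow_pos_of_pos (abs_pos.mpr (hqi i)) _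
      have hle2 : ∏ i, |q i| ^ ((2:ℝ)/3) ≤ ‖q‖ ^ 2 := by
        have hstep : ∀ i : Fin 3, |q i| ^ ((2:ℝ)/3) ≤ ‖q‖ ^ ((2:ℝ)/3) := by
          intro i
          apply Real.rpow_le_rpow (abs_nonneg _) _ (by norm_num)
          calc |q i| = ‖q i‖ := (Real.norm_eq_abs _).symm
            _ ≤ ‖q‖ := norm_le_pi_norm q i
        calc ∏ i, |q i| ^ ((2:ℝ)/3) ≤ ∏ _i : Fin 3, ‖q‖ ^ ((2:ℝ)/3) :=
              Finset.prod_le_prod (fun i _ => Real.rpow_nonneg (abs_nonneg _) _)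
                (fun i _ => hstep i)
          _ = (‖q‖ ^ ((2:ℝ)/3)) ^ (3:ℕ) := by
              rw [Finset.prod_const]; simp
          _ = ‖q‖ ^ 2 := by
              rw [← Real.rpow_natCast (‖q‖ ^ ((2:ℝ)/3)) 3, ← Real.rpow_mul (norm_nonneg q),
                ← Real.rpow_natCast ‖q‖ 2]
              norm_num
      have hDform : (∏ i, |q i| ^ ((2:ℝ)/3))⁻¹ = D q := by
        rw [← Finset.prod_inv_distrib]
        refine Finset.prod_congr rfl fun i _ => ?_
        rw [← Real.rpow_neg (abs_nonneg _)]
        norm_num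
      have h3 : (‖q‖ ^ 2)⁻¹ ≤ D q := by
        rw [← hDform]
        exact inv_anti₀ hprodpos hle2
      calc (ε q - lam)⁻¹ ≤ (c * ‖q‖ ^ 2)⁻¹ := h2
        _ = c⁻¹ * (‖q‖ ^ 2)⁻¹ := by rw [mul_inv]
        _ ≤ c⁻¹ * D q := by
            exact mul_le_mul_of_nonneg_left h3 (inv_nonneg.mpr hc.le)
        _ ≤ c⁻¹ * D q + δ⁻¹ := le_add_of_nonneg_right (inv_nonneg.mpr hδ.le)
    · -- far from zero
      have h1 : δ ≤ ε q - lam := le_trans (hfar q hqc hgtr.le) (by linarith [hlow q])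
      have h2 : (ε q - lam)⁻¹ ≤ δ⁻¹ := inv_anti₀ hδ h1
      calc (ε q - lam)⁻¹ ≤ δ⁻¹ := h2
        _ ≤ c⁻¹ * D q + δ⁻¹ := le_add_of_nonneg_left (by positivity)

set_option maxHeartbeats 1000000 in
/-- the Birman–Schwinger operator `G(λ)` is a compact bounded
operator on `C(𝕋³)`. -/
theorem birmanSchwinger_compact
    (ε : (Fin 3 → ℝ) → ℝ)
    (hεper : ∀ (p : Fin 3 → ℝ) (s : Fin 3 → ℤ),
      ε (fun i => p i + 2 * π * (s i : ℝ)) = ε p)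
    (hsmooth : ContDiff ℝ 2 ε)
    (hmin : ∀ p : Fin 3 → ℝ, ¬ (∀ i, ∃ n : ℤ, p i = 2 * π * n) → ε 0 < ε p)
    (hhess : ∀ u : Fin 3 → ℝ, u ≠ 0 → 0 < iteratedFDeriv ℝ 2 ε 0 ![u, u])
    (v : (Fin 3 → ℝ) → ℂ)
    (hv : Continuous v)
    (hvper : ∀ (p : Fin 3 → ℝ) (s : Fin 3 → ℤ),
      v (fun i => p i + 2 * π * (s i : ℝ)) = v p)
    (lam : ℝ) (hlam : lam ≤ ε 0) :
    ∃ G : C(Torus3, ℂ) →L[ℂ] C(Torus3, ℂ),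
      (∀ (f : C(Torus3, ℂ)) (p : Fin 3 → ℝ),
        G f (fun i => (p i : AddCircle (2 * π))) =
          (((2 * π) ^ (-(3 : ℝ) / 2) : ℝ) : ℂ) *
            ∫ q in cube3,
              v (p - q) * (((ε q - lam)⁻¹ : ℝ) : ℂ) *
                f (fun i => (q i : AddCircle (2 * π)))) ∧
      IsCompactOperator G := by
  classical
  -- the weight
  set w : (Fin 3 → ℝ) → ℝ := fun q => (ε q - lam)⁻¹ with hwdef
  have hw : IntegrableOn w cube3 volume := weightIntegrable ε hεper hsmooth hmin hhess lam hlam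
  have hlow := eps_lower ε hεper hmin
  have hw0 : ∀ q, 0 ≤ w q := fun q => inv_nonneg.mpr (by linarith [hlow q])
  set Iw : ℝ := ∫ q in cube3, w q with hIwdef
  have hIw0 : 0 ≤ Iw := setIntegral_nonneg measurableSet_Icc fun q _ => hw0 q
  set c : ℝ := (2 * π) ^ (-(3 : ℝ) / 2) with hcdef
  -- the projection onto the torus
  set π3 : (Fin 3 → ℝ) → Torus3 := fun p => fun i => (p i : AddCircle (2 * π)) with hπ3def
  have hπ3 : IsOpenQuotientMap π3 :=
    IsOpenQuotientMap.piMap (fun _ => QuotientAddGroup.isOpenQuotientMap_mk)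
  have hπ3surj : Function.Surjective π3 := hπ3.surjective
  have hπ3cont : Continuous π3 := hπ3.continuous
  have hπ3sub : ∀ p q : Fin 3 → ℝ, π3 p - π3 q = π3 (p - q) := fun p q => rfl
  -- lifting periodic functions to the torus
  set lift : ((Fin 3 → ℝ) → ℂ) → (Torus3 → ℂ) :=
    fun F => F ∘ Function.surjInv hπ3surj with hliftdef
  have hlift : ∀ F : (Fin 3 → ℝ) → ℂ,
      (∀ (p : Fin 3 → ℝ) (s : Fin 3 → ℤ), F (fun i => p i + 2 * π * (s i : ℝ)) = F p) →
      ∀ p, lift F (π3 p) = F p := by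
    intro F hF p
    have h1 : π3 (Function.surjInv hπ3surj (π3 p)) = π3 p :=
      Function.surjInv_eq hπ3surj (π3 p)
    set p' := Function.surjInv hπ3surj (π3 p) with hp'
    have h2 : ∀ i, ∃ k : ℤ, p i = p' i + 2 * π * (k : ℝ) := by
      intro i
      have h3 : ((p' i : ℝ) : AddCircle (2 * π)) = ((p i : ℝ) : AddCircle (2 * π)) :=
        congrFun h1 i
      rw [QuotientAddGroup.eq] at h3
      obtain ⟨k, hk⟩ := AddSubgroup.mem_zmultiples_iff.mp h3
      refine ⟨k, ?_⟩
      have h5 : (k : ℝ) * (2 * π) = -(p' i) + p i := by rw [← hk]; simp [zsmul_eq_mul]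
      linarith [h5]
    choose s hs using h2
    have h4 : (fun i => p' i + 2 * π * (s i : ℝ)) = p := funext fun i => (hs i).symm
    show F p' = F p
    rw [← hF p' s, h4]
  -- the lifted potential
  have hvTc : Continuous (lift v) := by
    rw [hπ3.isQuotientMap.continuous_iff]
    have h : lift v ∘ π3 = v := funext (hlift v hvper)
    rw [h]; exact hv
  set vT : C(Torus3, ℂ) := ⟨lift v, hvTc⟩ with hvTdef
  have hvT : ∀ p, vT (π3 p) = v p := hlift v hvper
  -- basic integrability
  have hwmeas : AEStronglyMeasurable (fun q => ((w q : ℝ) : ℂ)) (volume.restrict cube3) :=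
    (Complex.measurable_ofReal.comp
      ((hsmooth.continuous.sub continuous_const).measurable.inv)).aestronglyMeasurable
  have hInt : ∀ ψ : C(Torus3, ℂ),
      IntegrableOn (fun q => ψ (π3 q) * ((w q : ℝ) : ℂ)) cube3 volume := by
    intro ψ
    refine Integrable.mono' (Integrable.const_mul hw ‖ψ‖) ?_ ?_
    · exact ((ψ.continuous.comp hπ3cont).aestronglyMeasurable).mul hwmeas
    · refine Filter.Eventually.of_forall fun q => ?_
      rw [norm_mul, Complex.norm_real, Real.norm_eq_abs, abs_of_nonneg (hw0 q)]
      exact mul_le_mul_of_nonneg_right (ψ.norm_coe_le_norm _) (hw0 q)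
  have hKest : ∀ (ψ : C(Torus3, ℂ)) (C : ℝ), (∀ z, ‖ψ z‖ ≤ C) →
      ‖∫ q in cube3, ψ (π3 q) * ((w q : ℝ) : ℂ)‖ ≤ C * Iw := by
    intro ψ C hC
    have h1 : ‖∫ q in cube3, ψ (π3 q) * ((w q : ℝ) : ℂ)‖ ≤ ∫ q in cube3, C * w q := by
      refine norm_integral_le_of_norm_le (Integrable.const_mul hw C) ?_
      refine Filter.Eventually.of_forall fun q => ?_
      rw [norm_mul, Complex.norm_real, Real.norm_eq_abs, abs_of_nonneg (hw0 q)]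
      exact mul_le_mul_of_nonneg_right (hC _) (hw0 q)
    rwa [integral_const_mul] at h1
  -- the kernel acting on continuous functions
  set Ψ : C(Torus3, ℂ) → Torus3 → C(Torus3, ℂ) := fun f x =>
    ⟨fun z => vT (x - z) * f z,
      (vT.continuous.comp (continuous_const.sub continuous_id)).mul f.continuous⟩ with hΨdef
  set K : C(Torus3, ℂ) → Torus3 → ℂ := fun f x =>
    ∫ q in cube3, (Ψ f x) (π3 q) * ((w q : ℝ) : ℂ) with hKdef
  have hΨnorm : ∀ (f : C(Torus3, ℂ)) (x z : Torus3), ‖Ψ f x z‖ ≤ ‖vT‖ * ‖f‖ := by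
    intro f x z
    rw [hΨdef]
    show ‖vT (x - z) * f z‖ ≤ ‖vT‖ * ‖f‖
    rw [norm_mul]
    exact mul_le_mul (vT.norm_coe_le_norm _) (f.norm_coe_le_norm _) (norm_nonneg _)
      (norm_nonneg _)
  have hKb : ∀ (f : C(Torus3, ℂ)) (x : Torus3), ‖K f x‖ ≤ ‖vT‖ * ‖f‖ * Iw :=
    fun f x => hKest (Ψ f x) (‖vT‖ * ‖f‖) (hΨnorm f x)
  -- difference estimate
  have hKsub : ∀ (f : C(Torus3, ℂ)) (x y : Torus3),
      K f x - K f y = ∫ q in cube3, (Ψ f x - Ψ f y) (π3 q) * ((w q : ℝ) : ℂ) := by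
    intro f x y
    rw [hKdef]
    rw [← integral_sub (hInt (Ψ f x)) (hInt (Ψ f y))]
    congr 1
    funext q
    simp [ContinuousMap.sub_apply, sub_mul]
  have hucont : ∀ εp : ℝ, 0 < εp → ∃ δ > 0, ∀ x y : Torus3, dist x y < δ →
      ∀ z, ‖vT (x - z) - vT (y - z)‖ ≤ εp := by
    intro εp hεp
    have h := CompactSpace.uniformContinuous_of_continuous vT.continuous
    rw [Metric.uniformContinuous_iff] at h
    obtain ⟨δ, hδ, hball⟩ := h εp hεp
    refine ⟨δ, hδ, fun x y hxy z => ?_⟩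
    have hd : dist (x - z) (y - z) = dist x y := dist_sub_right x y z
    have := hball (by rw [hd]; exact hxy)
    rw [dist_eq_norm] at this
    exact this.le
  have hEst : ∀ εp : ℝ, 0 < εp → ∃ δ > 0, ∀ x y : Torus3, dist x y < δ →
      ∀ f : C(Torus3, ℂ), ‖K f x - K f y‖ ≤ εp * ‖f‖ * Iw := by
    intro εp hεp
    obtain ⟨δ, hδ, hvb⟩ := hucont εp hεp
    refine ⟨δ, hδ, fun x y hxy f => ?_⟩
    rw [hKsub f x y]
    refine hKest _ (εp * ‖f‖) fun z => ?_
    rw [ContinuousMap.sub_apply, hΨdef]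
    show ‖vT (x - z) * f z - vT (y - z) * f z‖ ≤ εp * ‖f‖
    rw [← sub_mul, norm_mul]
    exact mul_le_mul (hvb x y hxy z) (f.norm_coe_le_norm _) (norm_nonneg _) hεp.le
  -- continuity of K f
  have hKcont : ∀ f : C(Torus3, ℂ), Continuous (K f) := by
    intro f
    rw [Metric.continuous_iff]
    intro x ε₀ hε₀
    set D : ℝ := ‖f‖ * Iw with hDdef
    have hD : 0 ≤ D := mul_nonneg (norm_nonneg f) hIw0
    obtain ⟨δ, hδ, hest⟩ := hEst (ε₀ / (D + 1)) (by positivity)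
    refine ⟨δ, hδ, fun y hy => ?_⟩
    rw [dist_eq_norm]
    calc ‖K f y - K f x‖ ≤ ε₀ / (D + 1) * ‖f‖ * Iw := hest y x hy f
      _ < ε₀ := by
          rw [mul_assoc, ← hDdef, div_mul_eq_mul_div, div_lt_iff₀ (by positivity)]
          nlinarith
  -- the operator, as a linear map
  set G0 : C(Torus3, ℂ) →ₗ[ℂ] C(Torus3, ℂ) :=
    { toFun := fun f => ⟨fun x => (c : ℂ) * K f x, continuous_const.mul (hKcont f)⟩
      map_add' := by
        intro f g
        ext x
        show (c : ℂ) * K (f + g) x = (c : ℂ) * K f x + (c : ℂ) * K g x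
        have h1 : K (f + g) x = K f x + K g x := by
          have he : (fun q => (Ψ (f + g) x) (π3 q) * ((w q : ℝ) : ℂ)) =
              (fun q => (Ψ f x) (π3 q) * ((w q : ℝ) : ℂ) +
                (Ψ g x) (π3 q) * ((w q : ℝ) : ℂ)) := by
            funext q
            show vT (x - π3 q) * (f + g) (π3 q) * ((w q : ℝ) : ℂ) =
              vT (x - π3 q) * f (π3 q) * ((w q : ℝ) : ℂ) +
              vT (x - π3 q) * g (π3 q) * ((w q : ℝ) : ℂ)
            rw [ContinuousMap.add_apply]
            ring
          show (∫ q in cube3, (Ψ (f + g) x) (π3 q) * ((w q : ℝ) : ℂ)) = K f x + K g x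
          rw [he, integral_add (hInt (Ψ f x)) (hInt (Ψ g x))]
        rw [h1]
        ring
      map_smul' := by
        intro a f
        ext x
        show (c : ℂ) * K (a • f) x = a * ((c : ℂ) * K f x)
        have h1 : K (a • f) x = a * K f x := by
          have he : (fun q => (Ψ (a • f) x) (π3 q) * ((w q : ℝ) : ℂ)) =
              (fun q => a * ((Ψ f x) (π3 q) * ((w q : ℝ) : ℂ))) := by
            funext q
            show vT (x - π3 q) * (a • f) (π3 q) * ((w q : ℝ) : ℂ) =
              a * (vT (x - π3 q) * f (π3 q) * ((w q : ℝ) : ℂ))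
            rw [ContinuousMap.smul_apply, smul_eq_mul]
            ring
          show (∫ q in cube3, (Ψ (a • f) x) (π3 q) * ((w q : ℝ) : ℂ)) = a * K f x
          rw [he, integral_const_mul]
        rw [h1]
        ring } with hG0def
  have hG0b : ∀ f : C(Torus3, ℂ), ‖G0 f‖ ≤ |c| * (‖vT‖ * Iw) * ‖f‖ := by
    intro f
    rw [ContinuousMap.norm_le _ (by positivity)]
    intro x
    show ‖(c : ℂ) * K f x‖ ≤ |c| * (‖vT‖ * Iw) * ‖f‖
    rw [norm_mul, Complex.norm_real, Real.norm_eq_abs]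
    calc |c| * ‖K f x‖ ≤ |c| * (‖vT‖ * ‖f‖ * Iw) :=
          mul_le_mul_of_nonneg_left (hKb f x) (abs_nonneg c)
      _ = |c| * (‖vT‖ * Iw) * ‖f‖ := by ring
  set G : C(Torus3, ℂ) →L[ℂ] C(Torus3, ℂ) := G0.mkContinuous (|c| * (‖vT‖ * Iw)) hG0b
    with hGdef
  refine ⟨G, ?_, ?_⟩
  · -- the formula
    intro f p
    show (c : ℂ) * K f (π3 p) = (c : ℂ) * ∫ q in cube3,
        v (p - q) * ((w q : ℝ) : ℂ) * f (π3 q)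
    have he : (fun q => (Ψ f (π3 p)) (π3 q) * ((w q : ℝ) : ℂ)) =
        (fun q => v (p - q) * ((w q : ℝ) : ℂ) * f (π3 q)) := by
      funext q
      show vT (π3 p - π3 q) * f (π3 q) * ((w q : ℝ) : ℂ) =
        v (p - q) * ((w q : ℝ) : ℂ) * f (π3 q)
      rw [hπ3sub, hvT]
      ring
    have h1 : K f (π3 p) = ∫ q in cube3, v (p - q) * ((w q : ℝ) : ℂ) * f (π3 q) := by
      show (∫ q in cube3, (Ψ f (π3 p)) (π3 q) * ((w q : ℝ) : ℂ)) = _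
      rw [he]
    rw [h1]
  · -- compactness
    set M₀ : ℝ := |c| * (‖vT‖ * Iw) with hM₀def
    have hM₀ : 0 ≤ M₀ := by positivity
    set e : C(Torus3, ℂ) ≃ₜ BoundedContinuousFunction Torus3 ℂ :=
      (ContinuousMap.isometryEquivBoundedOfCompact Torus3 ℂ).toHomeomorph with hedef
    set A0 : Set C(Torus3, ℂ) := ⇑G '' Metric.closedBall 0 1 with hA0def
    set A : Set (BoundedContinuousFunction Torus3 ℂ) := ⇑e '' A0 with hAdef
    have hGnorm : ∀ f : C(Torus3, ℂ), ‖f‖ ≤ 1 → ∀ x, ‖G f x‖ ≤ M₀ := by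
      intro f hf x
      have h1 : ‖G f x‖ ≤ ‖G f‖ := (G f).norm_coe_le_norm x
      have h2 : ‖G f‖ ≤ M₀ * ‖f‖ := hG0b f
      calc ‖G f x‖ ≤ M₀ * ‖f‖ := h1.trans h2
        _ ≤ M₀ * 1 := mul_le_mul_of_nonneg_left hf hM₀
        _ = M₀ := mul_one _
    have hin_s : ∀ (F : BoundedContinuousFunction Torus3 ℂ) (x : Torus3), F ∈ A →
        F x ∈ Metric.closedBall (0 : ℂ) M₀ := by
      rintro F x ⟨g, ⟨f, hf, rfl⟩, rfl⟩
      rw [Metric.mem_closedBall, dist_zero_right]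
      have hf1 : ‖f‖ ≤ 1 := by
        rw [Metric.mem_closedBall, dist_zero_right] at hf
        exact hf
      exact hGnorm f hf1 x
    have hequi : Equicontinuous ((↑) : A → Torus3 → ℂ) := by
      intro x₀
      rw [Metric.equicontinuousAt_iff]
      intro εp hεp
      set ε' : ℝ := εp / (2 * (|c| * Iw + 1)) with hε'def
      have hε' : 0 < ε' := by positivity
      obtain ⟨δ, hδ, hest⟩ := hEst ε' hε'
      refine ⟨δ, hδ, fun x hx i => ?_⟩
      obtain ⟨g, ⟨f, hf, rfl⟩, hi⟩ := i.2
      have hf1 : ‖f‖ ≤ 1 := by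
        rw [Metric.mem_closedBall, dist_zero_right] at hf
        exact hf
      have hval : ∀ y : Torus3, (i : Torus3 → ℂ) y = (c : ℂ) * K f y := by
        intro y
        rw [← hi]
        rfl
      rw [dist_eq_norm, hval, hval]
      have h1 : (c : ℂ) * K f x₀ - (c : ℂ) * K f x = (c : ℂ) * (K f x₀ - K f x) := by ring
      rw [h1, norm_mul, Complex.norm_real, Real.norm_eq_abs]
      have h2 : ‖K f x₀ - K f x‖ ≤ ε' * ‖f‖ * Iw := by
        refine hest x₀ x ?_ f
        rw [dist_comm]
        exact hx
      have h3 : |c| * ‖K f x₀ - K f x‖ ≤ |c| * (ε' * ‖f‖ * Iw) :=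
        mul_le_mul_of_nonneg_left h2 (abs_nonneg c)
      have h4 : |c| * (ε' * ‖f‖ * Iw) ≤ ε' * (|c| * Iw) := by
        have : |c| * (ε' * ‖f‖ * Iw) = ε' * (|c| * Iw) * ‖f‖ := by ring
        rw [this]
        calc ε' * (|c| * Iw) * ‖f‖ ≤ ε' * (|c| * Iw) * 1 :=
              mul_le_mul_of_nonneg_left hf1 (by positivity)
          _ = ε' * (|c| * Iw) := mul_one _
      have h5 : ε' * (|c| * Iw) < εp := by
        rw [hε'def]
        rw [div_mul_eq_mul_div, div_lt_iff₀ (by positivity)]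
        nlinarith [abs_nonneg c, hIw0, mul_nonneg (abs_nonneg c) hIw0]
      linarith
    have hAA : IsCompact (closure A) :=
      BoundedContinuousFunction.arzela_ascoli (Metric.closedBall (0 : ℂ) M₀)
        (isCompact_closedBall 0 M₀) A hin_s hequi
    have hA0c : IsCompact (closure A0) := by
      have h1 : closure A = ⇑e '' closure A0 := by
        rw [hAdef]
        exact (e.image_closure A0).symm
      rw [h1] at hAA
      exact e.isCompact_image.mp hAA
    exact (isCompactOperator_iff_isCompact_closure_image_closedBall
      (G : C(Torus3, ℂ) →ₗ[ℂ] C(Torus3, ℂ)) one_pos).mpr hA0c
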